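/- Let P : {-1,1}^k → {0,1} be a predicate and 0 < δ < 1, and let 2 ≤ t ≤ k. Then P is δ-far from supporting a t-wise uniform distribution if and only if there exists a multilinear polynomial Q : {-1,1}^k → ℝ of degree at most t that δ-separates P. -/

import Mathlib

open Finset

variable {E : Type*} [NormedAddCommGroup E] [NormedSpace ℝ E] [FiniteDimensional ℝ E]
variable {m : Type*} [Fintype m] [DecidableEq m]

/-- points representable as nonneg combos with support in s -/
def coneOn (g : m → E) (s : Finset m) : Set E :=
  {x | ∃ lam : m → ℝ, (∀ i, 0 ≤ lam i) ∧ x = ∑ i ∈ s, lam i • g i}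

lemma caratheodory_cone (g : m → E) (s : Finset m) :
    ∀ x ∈ coneOn g s, ∃ u : Finset m,
      LinearIndependent ℝ (fun i : u => g i) ∧ x ∈ coneOn g u := by
  induction s using Finset.strongInduction with
  | _ s ih =>
    intro x hx
    by_cases hind : LinearIndependent ℝ (fun i : s => g i)
    · exact ⟨s, hind, hx⟩
    · obtain ⟨lam, hlam, rfl⟩ := hx
      rw [Fintype.linearIndependent_iff] at hind
      push_neg at hind
      obtain ⟨c, hc0, j, hcj⟩ := hind
      -- extend c to m
      set c' : m → ℝ := fun i => if h : i ∈ s then c ⟨i, h⟩ else 0 with hc'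
      have hc'sum : ∑ i ∈ s, c' i • g i = 0 := by
        rw [← hc0, ← Finset.sum_attach s (fun i => c' i • g i)]
        refine Finset.sum_congr rfl fun i _ => ?_
        simp [hc', i.2]
      have hc'j : c' (j : m) ≠ 0 := by simpa [hc', j.2] using hcj
      -- wlog some positive coefficient
      obtain ⟨d, hdsum, j', hj's, hdj'⟩ :
          ∃ d : m → ℝ, (∑ i ∈ s, d i • g i = 0) ∧ ∃ j' ∈ s, 0 < d j' := by
        rcases lt_or_gt_of_ne hc'j with h | h
        · exact ⟨-c', by simp [hc'sum], j, j.2, by simpa using h⟩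
        · exact ⟨c', hc'sum, j, j.2, h⟩
      set spos := s.filter (fun i => 0 < d i) with hspos
      have hne : spos.Nonempty := ⟨j', by simp [hspos, hj's, hdj']⟩
      obtain ⟨i₀, hi₀, hmin⟩ := Finset.exists_min_image spos (fun i => lam i / d i) hne
      have hi₀s : i₀ ∈ s := (Finset.mem_filter.1 hi₀).1
      have hdi₀ : 0 < d i₀ := (Finset.mem_filter.1 hi₀).2
      set θ := lam i₀ / d i₀ with hθ
      have hθ0 : 0 ≤ θ := div_nonneg (hlam i₀) hdi₀.le
      set lam' : m → ℝ := fun i => if i ∈ s.erase i₀ then lam i - θ * d i else 0 with hlam'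
      have hlam'0 : ∀ i, 0 ≤ lam' i := by
        intro i
        simp only [hlam']
        split_ifs with h
        · have his : i ∈ s := (Finset.mem_erase.1 h).2
          rcases le_or_gt (d i) 0 with hd | hd
          · nlinarith [hlam i]
          · have : θ ≤ lam i / d i := hmin i (by simp [hspos, his, hd])
            have h2 : θ * d i ≤ (lam i / d i) * d i := by
              exact mul_le_mul_of_nonneg_right this hd.le
            have h3 : (lam i / d i) * d i = lam i := by field_simp
            linarith
        · exact le_refl 0
      have key : ∑ i ∈ s, lam i • g i = ∑ i ∈ s.erase i₀, lam' i • g i := by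
        have h1 : ∑ i ∈ s, lam i • g i = ∑ i ∈ s, (lam i - θ * d i) • g i := by
          have : ∑ i ∈ s, (lam i - θ * d i) • g i
              = ∑ i ∈ s, lam i • g i - θ • ∑ i ∈ s, d i • g i := by
            rw [Finset.smul_sum, ← Finset.sum_sub_distrib]
            exact Finset.sum_congr rfl fun i _ => by
              rw [sub_smul, smul_smul]
          rw [this, hdsum, smul_zero, sub_zero]
        rw [h1, ← Finset.sum_erase_add s _ hi₀s]
        have : (lam i₀ - θ * d i₀) = 0 := by rw [hθ, div_mul_cancel₀ _ hdi₀.ne', sub_self]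
        rw [this, zero_smul, add_zero]
        exact Finset.sum_congr rfl fun i hi => by simp only [hlam', if_pos hi]
      have := ih (s.erase i₀) (Finset.erase_ssubset hi₀s)
        (∑ i ∈ s, lam i • g i) ⟨lam', hlam'0, key⟩
      exact this

lemma isClosed_coneOn_of_indep (g : m → E) (u : Finset m)
    (h : LinearIndependent ℝ (fun i : u => g i)) : IsClosed (coneOn g u) := by
  classical
  let φ : (u → ℝ) →ₗ[ℝ] E :=
    { toFun := fun lam => ∑ i : u, lam i • g i
      map_add' := by intro a b; simp [add_smul, Finset.sum_add_distrib]
      map_smul' := by intro a b; simp [smul_smul, Finset.smul_sum]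
      }
  have hker : LinearMap.ker φ = ⊥ := by
    rw [LinearMap.ker_eq_bot']
    intro lam hlm
    funext i
    exact Fintype.linearIndependent_iff.1 h lam hlm i
  have hemb := LinearMap.isClosedEmbedding_of_injective (f := φ) hker
  have : coneOn g u = φ '' {lam : u → ℝ | ∀ i, 0 ≤ lam i} := by
    ext x
    constructor
    · rintro ⟨lam, hlam, rfl⟩
      refine ⟨fun i => lam i, fun i => hlam i, ?_⟩
      simp only [φ, LinearMap.coe_mk, AddHom.coe_mk, Finset.univ_eq_attach]
      rw [← Finset.sum_attach u (fun i => lam i • g i)]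
    · rintro ⟨lam, hlam, rfl⟩
      refine ⟨fun i => if h : i ∈ u then lam ⟨i, h⟩ else 0, fun i => ?_, ?_⟩
      · dsimp only; split_ifs with h; exacts [hlam _, le_refl 0]
      · simp only [φ, LinearMap.coe_mk, AddHom.coe_mk, Finset.univ_eq_attach]
        rw [← Finset.sum_attach u fun i => (if h : i ∈ u then lam ⟨i, h⟩ else 0) • g i]
        exact Finset.sum_congr rfl fun i _ => by simp [i.2]
  rw [this]
  refine hemb.isClosedMap _ ?_
  have : {lam : u → ℝ | ∀ i, 0 ≤ lam i} = ⋂ i, {lam : u → ℝ | 0 ≤ lam i} := by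
    ext; simp [Set.mem_iInter]
  rw [this]
  exact isClosed_iInter fun i => isClosed_le continuous_const (continuous_apply i)

lemma isClosed_coneOn_univ (g : m → E) : IsClosed (coneOn g Finset.univ) := by
  have : coneOn g Finset.univ =
      ⋃ u : {u : Finset m // LinearIndependent ℝ (fun i : u => g i)}, coneOn g u := by
    ext x
    simp only [Set.mem_iUnion]
    constructor
    · intro hx
      obtain ⟨u, hu, hxu⟩ := caratheodory_cone g Finset.univ x hx
      exact ⟨⟨u, hu⟩, hxu⟩
    · rintro ⟨⟨u, hu⟩, lam, hlam, rfl⟩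
      refine ⟨fun i => if i ∈ u then lam i else 0, fun i => by dsimp only; split_ifs; exacts [hlam i, le_refl 0], ?_⟩
      rw [← Finset.sum_subset (Finset.subset_univ u)]
      · exact Finset.sum_congr rfl fun i hi => by simp [hi]
      · intro i _ hi; simp [hi]
  rw [this]
  exact isClosed_iUnion_of_finite fun u => isClosed_coneOn_of_indep g u u.2

open Finset

variable {k : ℕ}

/-- the character χ_S -/
def chi (S : Finset (Fin k)) (z : Fin k → Bool) : ℝ :=
  ∏ i ∈ S, (if z i then (1:ℝ) else -1)

lemma chi_congr {S T : Finset (Fin k)} (hST : S ⊆ T) {z y : Fin k → Bool}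
    (h : ∀ i ∈ T, z i = y i) : chi S z = chi S y :=
  Finset.prod_congr rfl fun i hi => by rw [h i (hST hi)]

lemma chi_flip {S : Finset (Fin k)} {i₀ : Fin k} (hi₀ : i₀ ∈ S) (y : Fin k → Bool) :
    chi S (Function.update y i₀ (!y i₀)) = -chi S y := by
  unfold chi
  rw [← Finset.mul_prod_erase S _ hi₀, ← Finset.mul_prod_erase S (fun i => if y i then (1:ℝ) else -1) hi₀]
  have h1 : ∀ i ∈ S.erase i₀, (if (Function.update y i₀ (!y i₀)) i then (1:ℝ) else -1)
      = (if y i then (1:ℝ) else -1) := by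
    intro i hi
    rw [Function.update_of_ne (Finset.ne_of_mem_erase hi)]
  rw [Finset.prod_congr rfl h1, Function.update_self]
  cases hy : y i₀ <;> simp <;> ring

lemma sum_chi_supported {S T : Finset (Fin k)} (hS : S.Nonempty) (hST : S ⊆ T) :
    ∑ y ∈ Finset.univ.filter
      (fun y : Fin k → Bool => (fun i => if i ∈ T then y i else false) = y), chi S y = 0 := by
  classical
  obtain ⟨i₀, hi₀⟩ := hS
  have hi₀T : i₀ ∈ T := hST hi₀
  refine Finset.sum_involution (fun y _ => Function.update y i₀ (!y i₀)) ?_ ?_ ?_ ?_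
  · intro y _
    rw [chi_flip hi₀]; ring
  · intro y _ _
    intro h
    have h2 := congrFun h i₀
    rw [Function.update_self] at h2
    exact (Bool.not_ne_self (y i₀)) h2
  · intro y hy
    simp only [Finset.mem_filter, Finset.mem_univ, true_and] at hy ⊢
    funext i
    by_cases hii : i = i₀
    · subst hii; simp [hi₀T]
    · rw [Function.update_of_ne hii]
      have := congrFun hy i
      simpa [Function.update_of_ne hii] using this
  · intro y _
    funext i
    by_cases hii : i = i₀
    · subst hii; simp
    · rw [Function.update_of_ne hii, Function.update_of_ne hii]

/-- marginal constraints imply vanishing character expectations -/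
lemma marg_to_char {t : ℕ} (htk : t ≤ k) (D : (Fin k → Bool) → ℝ)
    (hm : ∀ T : Finset (Fin k), T.card = t → ∀ y : Fin k → Bool,
      ∑ z ∈ Finset.univ.filter (fun z : Fin k → Bool => ∀ i ∈ T, z i = y i), D z = 1 / 2 ^ t)
    {S : Finset (Fin k)} (hS : S.Nonempty) (hSt : S.card ≤ t) :
    ∑ z, D z * chi S z = 0 := by
  classical
  obtain ⟨T, hST, hT⟩ := Finset.exists_superset_card_eq hSt (by simp [htk])
  set fT : (Fin k → Bool) → (Fin k → Bool) := fun z i => if i ∈ T then z i else false with hfT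
  have hfib := Finset.sum_fiberwise Finset.univ fT (fun z => D z * chi S z)
  rw [← hfib]
  have step : ∀ y : Fin k → Bool,
      ∑ z ∈ Finset.univ.filter (fun z => fT z = y), D z * chi S z
      = if fT y = y then chi S y * (1 / 2 ^ t) else 0 := by
    intro y
    by_cases hy : fT y = y
    · rw [if_pos hy]
      have hset : Finset.univ.filter (fun z => fT z = y)
          = Finset.univ.filter (fun z : Fin k → Bool => ∀ i ∈ T, z i = y i) := by
        ext z
        simp only [Finset.mem_filter, Finset.mem_univ, true_and]
        constructor
        · intro h i hi
          rw [← h]; simp [hfT, hi]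
        · intro h
          funext i
          by_cases hi : i ∈ T
          · simp [hfT, hi, h i hi]
          · have := congrFun hy i
            simp only [hfT, if_neg hi] at this ⊢
            exact this
      have hconst : ∀ z ∈ Finset.univ.filter (fun z => fT z = y), D z * chi S z = D z * chi S y := by
        intro z hz
        rw [hset] at hz
        simp only [Finset.mem_filter, Finset.mem_univ, true_and] at hz
        rw [chi_congr hST hz]
      rw [Finset.sum_congr rfl hconst, hset, ← Finset.sum_mul, hm T hT y]
      ring
    · rw [if_neg hy]
      apply Finset.sum_eq_zero
      intro z hz
      simp only [Finset.mem_filter, Finset.mem_univ, true_and] at hz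
      exfalso
      apply hy
      rw [← hz]
      funext i
      by_cases hi : i ∈ T <;> simp [hfT, hi]
  rw [Finset.sum_congr rfl (fun y _ => step y), Finset.sum_ite, Finset.sum_const_zero, add_zero]
  rw [← Finset.sum_mul, sum_chi_supported hS hST, zero_mul]

/-- vanishing character expectations imply marginal constraints -/
lemma char_to_marg {t : ℕ} (D : (Fin k → Bool) → ℝ) (hsum : ∑ z, D z = 1)
    (hc : ∀ S : Finset (Fin k), S.Nonempty → S.card ≤ t → ∑ z, D z * chi S z = 0)
    (T : Finset (Fin k)) (hT : T.card = t) (y : Fin k → Bool) :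
    ∑ z ∈ Finset.univ.filter (fun z : Fin k → Bool => ∀ i ∈ T, z i = y i), D z = 1 / 2 ^ t := by
  classical
  have ind : ∀ z : Fin k → Bool, (if (∀ i ∈ T, z i = y i) then (1:ℝ) else 0)
      = ∏ i ∈ T, ((1 + (if z i then (1:ℝ) else -1) * (if y i then (1:ℝ) else -1)) / 2) := by
    intro z
    by_cases h : ∀ i ∈ T, z i = y i
    · rw [if_pos h]
      rw [Finset.prod_congr rfl (fun i hi => ?_)]
      · rw [Finset.prod_const_one]
      · rw [h i hi]
        cases y i <;> norm_num
    · rw [if_neg h]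
      push_neg at h
      obtain ⟨i, hiT, hzi⟩ := h
      refine (Finset.prod_eq_zero hiT ?_).symm
      cases hz : z i <;> cases hyy : y i <;> simp_all <;> norm_num
  have expand : ∀ z : Fin k → Bool,
      ∏ i ∈ T, ((1 + (if z i then (1:ℝ) else -1) * (if y i then (1:ℝ) else -1)) / 2)
      = ∑ s ∈ T.powerset, chi s z * chi s y * (1 / 2 ^ t) := by
    intro z
    have h1 : ∀ i ∈ T, ((1 + (if z i then (1:ℝ) else -1) * (if y i then (1:ℝ) else -1)) / 2)
        = ((if z i then (1:ℝ) else -1) * (if y i then (1:ℝ) else -1) * (1/2) + 1/2) := by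
      intro i _; ring
    rw [Finset.prod_congr rfl h1, Finset.prod_add]
    refine Finset.sum_congr rfl fun s hs => ?_
    have hsT : s ⊆ T := Finset.mem_powerset.1 hs
    rw [Finset.prod_const, Finset.prod_mul_distrib, Finset.prod_mul_distrib, Finset.prod_const]
    have hcard : s.card + (T \ s).card = t := by
      have h4 := Finset.card_le_card hsT
      rw [Finset.card_sdiff_of_subset hsT, hT]
      omega
    have : ((1:ℝ)/2) ^ s.card * ((1:ℝ)/2) ^ (T \ s).card = 1 / 2 ^ t := by
      rw [← pow_add, hcard, one_div, one_div, inv_pow]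
    unfold chi
    calc (∏ i ∈ s, (if z i then (1:ℝ) else -1)) * (∏ i ∈ s, (if y i then (1:ℝ) else -1)) * (1/2) ^ s.card * ((1/2) ^ (T \ s).card)
        = (∏ i ∈ s, (if z i then (1:ℝ) else -1)) * (∏ i ∈ s, (if y i then (1:ℝ) else -1)) * ((1/2) ^ s.card * (1/2) ^ (T \ s).card) := by ring
      _ = _ := by rw [this]
  calc ∑ z ∈ Finset.univ.filter (fun z : Fin k → Bool => ∀ i ∈ T, z i = y i), D z
      = ∑ z : Fin k → Bool, D z * (if (∀ i ∈ T, z i = y i) then (1:ℝ) else 0) := by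
        rw [Finset.sum_filter]
        exact Finset.sum_congr rfl fun z _ => by split_ifs <;> simp
    _ = ∑ z : Fin k → Bool, ∑ s ∈ T.powerset, D z * (chi s z * chi s y * (1 / 2 ^ t)) := by
        refine Finset.sum_congr rfl fun z _ => ?_
        rw [ind z, expand z, Finset.mul_sum]
    _ = ∑ s ∈ T.powerset, ∑ z : Fin k → Bool, D z * (chi s z * chi s y * (1 / 2 ^ t)) :=
        Finset.sum_comm
    _ = ∑ s ∈ T.powerset, (chi s y * (1 / 2 ^ t)) * ∑ z : Fin k → Bool, D z * chi s z := by
        refine Finset.sum_congr rfl fun s _ => ?_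
        rw [Finset.mul_sum]
        exact Finset.sum_congr rfl fun z _ => by ring
    _ = 1 / 2 ^ t := by
        rw [Finset.sum_eq_single ∅]
        · simp [chi, hsum]
        · intro s hs hne
          have : ∑ z, D z * chi s z = 0 :=
            hc s (Finset.nonempty_iff_ne_empty.2 hne)
              (le_trans (Finset.card_le_card (Finset.mem_powerset.1 hs)) (le_of_eq hT))
          rw [this, mul_zero]
        · intro h; exact absurd (Finset.empty_mem_powerset T) h
open Finset RealInnerProductSpace

section Main
variable (k t : ℕ)

/-- generators: ±χ_S for valid S, and the standard basis vectors -/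
noncomputable def gens : (Finset (Fin k) ⊕ Finset (Fin k) ⊕ (Fin k → Bool)) →
    EuclideanSpace ℝ (Fin k → Bool)
  | .inl S => WithLp.toLp 2 fun z => if S.Nonempty ∧ S.card ≤ t then chi S z else 0
  | .inr (.inl S) => WithLp.toLp 2 fun z => if S.Nonempty ∧ S.card ≤ t then -chi S z else 0
  | .inr (.inr w) => WithLp.toLp 2 fun z => if z = w then 1 else 0

lemma gen_mem (g0 : Finset (Fin k) ⊕ Finset (Fin k) ⊕ (Fin k → Bool)) :
    gens k t g0 ∈ coneOn (gens k t) Finset.univ := by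
  classical
  refine ⟨fun g => if g = g0 then 1 else 0, fun g => by dsimp only; split_ifs <;> norm_num, ?_⟩
  rw [Finset.sum_congr rfl (fun g _ => by
    rw [ite_smul, one_smul, zero_smul] :
    ∀ g ∈ Finset.univ, (if g = g0 then (1:ℝ) else 0) • gens k t g
      = if g = g0 then gens k t g else 0)]
  rw [Finset.sum_ite_eq' Finset.univ g0 (fun g => gens k t g), if_pos (Finset.mem_univ _)]

lemma zero_mem_cone : (0 : EuclideanSpace ℝ (Fin k → Bool)) ∈ coneOn (gens k t) Finset.univ :=
  ⟨fun _ => 0, fun _ => le_refl 0, by simp⟩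

/-- the cone generated by the generators, as a ConvexCone -/
noncomputable def theCone : ConvexCone ℝ (EuclideanSpace ℝ (Fin k → Bool)) where
  carrier := coneOn (gens k t) Finset.univ
  smul_mem' := by
    rintro c hc x ⟨lam, hlam, rfl⟩
    refine ⟨fun g => c * lam g, fun g => mul_nonneg hc.le (hlam g), ?_⟩
    rw [Finset.smul_sum]
    exact Finset.sum_congr rfl fun g _ => by rw [smul_smul]
  add_mem' := by
    rintro x ⟨lam, hlam, rfl⟩ y ⟨mu, hmu, rfl⟩
    refine ⟨fun g => lam g + mu g, fun g => add_nonneg (hlam g) (hmu g), ?_⟩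
    rw [← Finset.sum_add_distrib]
    exact Finset.sum_congr rfl fun g _ => by rw [add_smul]

lemma inner_eval (x y : EuclideanSpace ℝ (Fin k → Bool)) : ⟪x, y⟫ = ∑ z, x z * y z := by
  rw [PiLp.inner_apply]; exact Finset.sum_congr rfl fun z _ => by simp [mul_comm]

end Main

/-- LP duality characterization: for a predicate `P : {-1,1}^k → {0,1}`,
`0 < δ < 1` and `2 ≤ t ≤ k`, `P` is δ-far from supporting a t-wise uniform distribution
(every t-wise uniform distribution puts mass ≥ δ on `P⁻¹(0)`) if and only if there is a
multilinear polynomial `Q` of degree ≤ t (given by its Fourier coefficients), with zero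
constant coefficient, satisfying `Q(z) ≥ δ - 1` everywhere and `Q(z) ≥ δ` on `P⁻¹(1)`. -/
theorem delta_far_iff_separating_poly {k t : ℕ} (P : (Fin k → Bool) → Bool)
    (δ : ℝ) (hδ0 : 0 < δ) (hδ1 : δ < 1) (ht : 2 ≤ t) (htk : t ≤ k) :
    (∀ D : (Fin k → Bool) → ℝ,
        (∀ z, 0 ≤ D z) → (∑ z, D z = 1) →
        (∀ T : Finset (Fin k), T.card = t → ∀ y : Fin k → Bool,
          ∑ z ∈ Finset.univ.filter (fun z : Fin k → Bool => ∀ i ∈ T, z i = y i), D z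
            = 1 / 2 ^ t) →
        δ ≤ ∑ z ∈ Finset.univ.filter (fun z : Fin k → Bool => P z = false), D z)
    ↔
    (∃ Q : Finset (Fin k) → ℝ,
        (∀ S : Finset (Fin k), t < S.card → Q S = 0) ∧ Q ∅ = 0 ∧
        (∀ z : Fin k → Bool,
          δ - 1 ≤ ∑ S : Finset (Fin k), Q S * ∏ i ∈ S, (if z i then (1:ℝ) else -1)) ∧
        (∀ z : Fin k → Bool, P z = true →
          δ ≤ ∑ S : Finset (Fin k), Q S * ∏ i ∈ S, (if z i then (1:ℝ) else -1))) := by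
  classical
  set f : (Fin k → Bool) → ℝ := fun z => if P z = false then 1 else 0 with hf
  constructor
  · intro hfar
    -- step 1: the vector f - δ𝟙 belongs to the cone
    set b : EuclideanSpace ℝ (Fin k → Bool) := WithLp.toLp 2 fun z => f z - δ with hb
    have hbmem : b ∈ coneOn (gens k t) Finset.univ := by
      by_contra hnb
      obtain ⟨y, hy1, hy2⟩ :=
        ProperCone.hyperplane_separation'
          ({ toSubmodule := (theCone k t).toPointedCone (zero_mem_cone k t),
             isClosed' := isClosed_coneOn_univ (gens k t) } : ProperCone ℝ _) hnb
      -- y is nonnegative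
      have hpos : ∀ z, 0 ≤ y z := by
        intro z
        have h := hy1 _ (gen_mem k t (.inr (.inr z)))
        rw [inner_eval] at h
        calc (0:ℝ) ≤ ∑ w, gens k t (.inr (.inr z)) w * y w := h
          _ = y z := by
              rw [show (fun w => gens k t (Sum.inr (Sum.inr z)) w * y w)
                  = fun w => if w = z then y w else 0 from funext fun w => by
                    show (if w = z then (1:ℝ) else 0) * y w = _
                    split_ifs <;> ring]
              rw [Finset.sum_ite_eq' Finset.univ z y, if_pos (Finset.mem_univ _)]
      -- characters are orthogonal to y
      have hchar : ∀ S : Finset (Fin k), S.Nonempty → S.card ≤ t →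
          ∑ z, y z * chi S z = 0 := by
        intro S hS hSt
        have h1 := hy1 _ (gen_mem k t (.inl S))
        have h2 := hy1 _ (gen_mem k t (.inr (.inl S)))
        rw [inner_eval] at h1 h2
        have e1 : ∑ w, gens k t (.inl S) w * y w = ∑ z, y z * chi S z := by
          refine Finset.sum_congr rfl fun w _ => ?_
          show (if S.Nonempty ∧ S.card ≤ t then chi S w else 0) * y w = _
          rw [if_pos ⟨hS, hSt⟩]; ring
        have e2 : ∑ w, gens k t (.inr (.inl S)) w * y w = -∑ z, y z * chi S z := by
          rw [← Finset.sum_neg_distrib]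
          refine Finset.sum_congr rfl fun w _ => ?_
          show (if S.Nonempty ∧ S.card ≤ t then -chi S w else 0) * y w = _
          rw [if_pos ⟨hS, hSt⟩]; ring
        rw [e1] at h1; rw [e2] at h2
        linarith
      -- the separating inequality
      rw [inner_eval] at hy2
      have hy2' : ∑ z, y z * f z - δ * ∑ z, y z < 0 := by
        have : ∑ z, y z * b z = ∑ z, y z * f z - δ * ∑ z, y z := by
          rw [Finset.mul_sum, ← Finset.sum_sub_distrib]
          refine Finset.sum_congr rfl fun z _ => ?_
          show y z * (f z - δ) = _
          ring
        linarith [this ▸ (by simpa only [mul_comm] using hy2 : ∑ z, y z * b z < 0)]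
      set s := ∑ z, y z with hs
      have hmass0 : 0 ≤ ∑ z, y z * f z :=
        Finset.sum_nonneg fun z _ => mul_nonneg (hpos z)
          (by by_cases h : P z = false <;> simp [hf, h])
      have hspos : 0 < s := by
        rcases lt_or_eq_of_le (Finset.sum_nonneg fun z _ => hpos z) with h | h
        · exact h
        · exfalso
          have hsum0 : ∑ z, y z = 0 := by rw [← hs]; exact h.symm
          have hall : ∀ z ∈ Finset.univ, y z = 0 :=
            (Finset.sum_eq_zero_iff_of_nonneg fun z _ => hpos z).1 hsum0
          have hzero : ∑ z, y z * f z = 0 :=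
            Finset.sum_eq_zero fun z hz => by rw [hall z hz, zero_mul]
          have hseq : δ * s = 0 := by rw [hs, hsum0, mul_zero]
          linarith
      -- normalize to a distribution and contradict hfar
      set D : (Fin k → Bool) → ℝ := fun z => y z / s with hD
      have hδle := hfar D (fun z => div_nonneg (hpos z) hspos.le)
        (by rw [← Finset.sum_div, ← hs, div_self hspos.ne'])
        (char_to_marg D (by rw [← Finset.sum_div, ← hs, div_self hspos.ne'])
          (fun S hS hSt => by
            have : ∑ z, D z * chi S z = (∑ z, y z * chi S z) / s := by
              rw [Finset.sum_div]
              exact Finset.sum_congr rfl fun z _ => by rw [hD]; ring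
            rw [this, hchar S hS hSt, zero_div]))
      have hmasseq : ∑ z ∈ Finset.univ.filter (fun z : Fin k → Bool => P z = false), D z
          = (∑ z, y z * f z) / s := by
        rw [Finset.sum_filter, Finset.sum_div]
        refine Finset.sum_congr rfl fun z _ => ?_
        by_cases h : P z = false <;> simp [hD, hf, h]
      rw [hmasseq] at hδle
      have := (le_div_iff₀ hspos).1 hδle
      linarith
    -- step 2: extract Q from the cone representation
    obtain ⟨lam, hlam, hbeq⟩ := hbmem
    set a : Finset (Fin k) → ℝ := fun S =>
      if S.Nonempty ∧ S.card ≤ t then lam (.inl S) - lam (.inr (.inl S)) else 0 with ha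
    have hbz : ∀ z, b z = (∑ S : Finset (Fin k), a S * chi S z) + lam (.inr (.inr z)) := by
      intro z
      have h0 : b z = ∑ g, lam g * gens k t g z := by
        rw [hbeq]
        rw [WithLp.ofLp_sum, Finset.sum_apply]
        rfl
      rw [h0, Fintype.sum_sum_type, Fintype.sum_sum_type]
      have e3 : ∑ w : Fin k → Bool, lam (.inr (.inr w)) * gens k t (.inr (.inr w)) z
          = lam (.inr (.inr z)) := by
        rw [show (fun w : Fin k → Bool => lam (.inr (.inr w)) * gens k t (.inr (.inr w)) z)
            = fun w => if w = z then lam (.inr (.inr w)) else 0 from funext fun w => by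
              show lam _ * (if z = w then (1:ℝ) else 0) = _
              rcases eq_or_ne w z with h | h
              · subst h; simp
              · rw [if_neg (Ne.symm h), if_neg h, mul_zero]]
        rw [Finset.sum_ite_eq' Finset.univ z _, if_pos (Finset.mem_univ _)]
      have e12 : ∀ S : Finset (Fin k),
          lam (.inl S) * gens k t (.inl S) z + lam (.inr (.inl S)) * gens k t (.inr (.inl S)) z
          = a S * chi S z := by
        intro S
        show lam (.inl S) * (if S.Nonempty ∧ S.card ≤ t then chi S z else 0)
          + lam (.inr (.inl S)) * (if S.Nonempty ∧ S.card ≤ t then -chi S z else 0) = _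
        by_cases hc : S.Nonempty ∧ S.card ≤ t
        · simp only [ha, if_pos hc]; ring
        · simp only [ha, if_neg hc]; ring
      rw [e3]
      have e4 : (∑ S : Finset (Fin k), lam (.inl S) * gens k t (.inl S) z)
          + (∑ S : Finset (Fin k), lam (.inr (.inl S)) * gens k t (.inr (.inl S)) z)
          = ∑ S : Finset (Fin k), a S * chi S z := by
        rw [← Finset.sum_add_distrib]
        exact Finset.sum_congr rfl fun S _ => e12 S
      rw [← e4]
      ring
    refine ⟨fun S => -a S, ?_, ?_, ?_, ?_⟩
    · intro S hSt
      simp only [ha, neg_eq_zero]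
      rw [if_neg]
      rintro ⟨-, h⟩; omega
    · simp [ha]
    · intro z
      have h1 := hbz z
      have h2 : ∑ S : Finset (Fin k), -a S * chi S z = δ - f z + lam (.inr (.inr z)) := by
        rw [show (fun S : Finset (Fin k) => -a S * chi S z) = fun S => -(a S * chi S z)
          from funext fun S => by ring, Finset.sum_neg_distrib]
        rw [hb] at h1
        dsimp only at h1
        linarith
      have h3 : ∑ S : Finset (Fin k), -a S * ∏ i ∈ S, (if z i then (1:ℝ) else -1)
          = δ - f z + lam (.inr (.inr z)) := h2
      rw [h3]
      have : f z ≤ 1 := by by_cases h : P z = false <;> simp [hf, h]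
      have := hlam (.inr (.inr z))
      linarith
    · intro z hz
      have h2 : ∑ S : Finset (Fin k), -a S * chi S z = δ - f z + lam (.inr (.inr z)) := by
        rw [show (fun S : Finset (Fin k) => -a S * chi S z) = fun S => -(a S * chi S z)
          from funext fun S => by ring, Finset.sum_neg_distrib]
        have h1 := hbz z
        rw [hb] at h1
        dsimp only at h1
        linarith
      have h3 : ∑ S : Finset (Fin k), -a S * ∏ i ∈ S, (if z i then (1:ℝ) else -1)
          = δ - f z + lam (.inr (.inr z)) := h2
      rw [h3]
      have : f z = 0 := by simp [hf, hz]
      have := hlam (.inr (.inr z))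
      linarith
  · rintro ⟨Q, hQt, hQ0, hQlb, hQub⟩ D hD0 hDsum hDmarg
    have hchar : ∀ S : Finset (Fin k), S.Nonempty → S.card ≤ t →
        ∑ z, D z * chi S z = 0 := fun S hS hSt => marg_to_char htk D hDmarg hS hSt
    have hEQ : ∑ z, D z * (∑ S : Finset (Fin k), Q S * chi S z) = 0 := by
      calc ∑ z, D z * (∑ S : Finset (Fin k), Q S * chi S z)
          = ∑ z, ∑ S : Finset (Fin k), Q S * (D z * chi S z) := by
            refine Finset.sum_congr rfl fun z _ => ?_
            rw [Finset.mul_sum]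
            exact Finset.sum_congr rfl fun S _ => by ring
        _ = ∑ S : Finset (Fin k), Q S * ∑ z, D z * chi S z := by
            rw [Finset.sum_comm]
            exact Finset.sum_congr rfl fun S _ => by rw [Finset.mul_sum]
        _ = 0 := by
            refine Finset.sum_eq_zero fun S _ => ?_
            rcases Finset.eq_empty_or_nonempty S with h | h
            · rw [h, hQ0, zero_mul]
            · rcases le_or_gt S.card t with h2 | h2
              · rw [hchar S h h2, mul_zero]
              · rw [hQt S h2, zero_mul]
    have hptwise : ∀ z, D z * (δ - f z) ≤ D z * (∑ S : Finset (Fin k), Q S * chi S z) := by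
      intro z
      refine mul_le_mul_of_nonneg_left ?_ (hD0 z)
      rcases Bool.eq_false_or_eq_true (P z) with h | h
      · have : f z = 0 := by simp [hf, h]
        rw [this, sub_zero]
        exact hQub z h
      · have : f z = 1 := by simp [hf, h]
        rw [this]
        exact hQlb z
    have hsum2 : ∑ z, D z * (δ - f z)
        = δ - ∑ z ∈ Finset.univ.filter (fun z : Fin k → Bool => P z = false), D z := by
      have e1 : ∑ z ∈ Finset.univ.filter (fun z : Fin k → Bool => P z = false), D z
          = ∑ z, D z * f z := by
        rw [Finset.sum_filter]
        refine Finset.sum_congr rfl fun z _ => ?_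
        by_cases h : P z = false <;> simp [hf, h]
      rw [e1]
      calc ∑ z, D z * (δ - f z) = ∑ z, (δ * D z - D z * f z) := by
            refine Finset.sum_congr rfl fun z _ => by ring
        _ = δ * ∑ z, D z - ∑ z, D z * f z := by
            rw [Finset.sum_sub_distrib, Finset.mul_sum]
        _ = _ := by rw [hDsum, mul_one]
    have := Finset.sum_le_sum fun z (_ : z ∈ Finset.univ) => hptwise z
    rw [hEQ, hsum2] at this
    linarith
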